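/- Let α > 0, let X₀ be a random variable with the gamma distribution with shape α and rate 1, and let U be uniformly distributed on (0,1), independent of X₀. Define Y₁ = X₀ - ln U and Y₂ = X₀ - ln(1-U). Then the law of (Y₁, Y₂) is absolutely continuous with respect to the Lebesgue measure on ℝ², with density f(y₁,y₂) = (y₁ - ln(1+e^{y₁-y₂}))^{α-1} / (Γ(α)·(e^{y₁} + e^{y₂})) on the region {(y₁,y₂) : y₁ > 0 and y₂ > y₁ - ln(e^{y₁}-1)}, and density 0 outside that region. -/

import Mathlib

open Real MeasureTheory ProbabilityTheory Set

noncomputable def fmap : ℝ × ℝ → ℝ × ℝ := fun p => (p.1 - Real.log p.2, p.1 - Real.log (1 - p.2))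

noncomputable def fder (p : ℝ × ℝ) : (ℝ × ℝ) →L[ℝ] (ℝ × ℝ) :=
  (ContinuousLinearMap.fst ℝ ℝ ℝ - p.2⁻¹ • ContinuousLinearMap.snd ℝ ℝ ℝ).prod
  (ContinuousLinearMap.fst ℝ ℝ ℝ + (1 - p.2)⁻¹ • ContinuousLinearMap.snd ℝ ℝ ℝ)

def sSet : Set (ℝ × ℝ) := Ioi 0 ×ˢ Ioo 0 1
def tSet : Set (ℝ × ℝ) := {p | 0 < p.1 ∧ p.1 - Real.log (Real.exp p.1 - 1) < p.2}

noncomputable def rho0 (α : ℝ) : ℝ × ℝ → ENNReal :=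
  fun p => ENNReal.ofReal (p.1 ^ (α - 1) * Real.exp (-p.1) / Real.Gamma α)

noncomputable def dens1 (α : ℝ) : ℝ × ℝ → ENNReal := fun p =>
  ENNReal.ofReal ((p.1 - Real.log (1 + Real.exp (p.1 - p.2))) ^ (α - 1) /
    (Real.Gamma α * (Real.exp p.1 + Real.exp p.2)))

lemma fmap_measurable : Measurable fmap :=
  (measurable_fst.sub (Real.measurable_log.comp measurable_snd)).prodMk
    (measurable_fst.sub (Real.measurable_log.comp (measurable_const.sub measurable_snd)))

lemma sSet_measurable : MeasurableSet sSet :=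
  measurableSet_Ioi.prod measurableSet_Ioo

lemma tSet_measurable : MeasurableSet tSet := by
  apply MeasurableSet.inter
  · exact measurableSet_lt measurable_const measurable_fst
  · exact measurableSet_lt
      (measurable_fst.sub (Real.measurable_log.comp ((Real.measurable_exp.comp measurable_fst).sub measurable_const)))
      measurable_snd

lemma fder_det (p : ℝ × ℝ) : (fder p).det = p.2⁻¹ + (1 - p.2)⁻¹ := by
  have : LinearMap.toMatrix (Module.Basis.finTwoProd ℝ) (Module.Basis.finTwoProd ℝ) (fder p : (ℝ×ℝ) →ₗ[ℝ] (ℝ×ℝ))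
      = !![1, -p.2⁻¹; 1, (1 - p.2)⁻¹] := by
    ext i j
    fin_cases i <;> fin_cases j <;>
      simp [LinearMap.toMatrix_apply, fder, Module.Basis.finTwoProd_zero, Module.Basis.finTwoProd_one,
        Module.Basis.coe_finTwoProd_repr]
  rw [ContinuousLinearMap.det, ← LinearMap.det_toMatrix (Module.Basis.finTwoProd ℝ), this,
    Matrix.det_fin_two_of]
  ring

lemma fmap_hasFDerivAt {p : ℝ × ℝ} (h0 : 0 < p.2) (h1 : p.2 < 1) :
    HasFDerivAt fmap (fder p) p := by
  have h2 : (0:ℝ) < 1 - p.2 := by linarith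
  have d1 : HasFDerivAt (fun q : ℝ × ℝ => q.1 - Real.log q.2)
      (ContinuousLinearMap.fst ℝ ℝ ℝ - p.2⁻¹ • ContinuousLinearMap.snd ℝ ℝ ℝ) p :=
    (hasFDerivAt_fst).sub ((Real.hasDerivAt_log h0.ne').comp_hasFDerivAt p (hasFDerivAt_snd))
  have d2 : HasFDerivAt (fun q : ℝ × ℝ => q.1 - Real.log (1 - q.2))
      (ContinuousLinearMap.fst ℝ ℝ ℝ + (1 - p.2)⁻¹ • ContinuousLinearMap.snd ℝ ℝ ℝ) p := by
    have inner : HasFDerivAt (fun q : ℝ × ℝ => 1 - q.2)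
        (-(ContinuousLinearMap.snd ℝ ℝ ℝ)) p := by
      simpa using (hasFDerivAt_snd (𝕜 := ℝ) (E := ℝ) (F := ℝ) (p := p)).const_sub (1:ℝ)
    have := (Real.hasDerivAt_log h2.ne').comp_hasFDerivAt p inner
    have h3 := (hasFDerivAt_fst (𝕜 := ℝ) (E := ℝ) (F := ℝ) (p := p)).sub this
    refine h3.congr_fderiv ?_
    refine ContinuousLinearMap.ext fun q => ?_
    simp
    try ring
  exact d1.prodMk d2

lemma fmap_left_inv {p : ℝ × ℝ} (hp : p ∈ sSet) :
    (fmap p).1 - Real.log (1 + Real.exp ((fmap p).1 - (fmap p).2)) = p.1 ∧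
    (1 + Real.exp ((fmap p).1 - (fmap p).2))⁻¹ = p.2 := by
  have hx : (0:ℝ) < p.1 := hp.1
  have hu0 : (0:ℝ) < p.2 := hp.2.1
  have hu1 : p.2 < 1 := hp.2.2
  have h1u : (0:ℝ) < 1 - p.2 := by linarith
  have hE : Real.exp ((fmap p).1 - (fmap p).2) = (1 - p.2) / p.2 := by
    simp only [fmap]
    rw [show p.1 - Real.log p.2 - (p.1 - Real.log (1 - p.2)) = Real.log (1 - p.2) - Real.log p.2 by ring,
      Real.exp_sub, Real.exp_log h1u, Real.exp_log hu0]
  have hsum : 1 + Real.exp ((fmap p).1 - (fmap p).2) = p.2⁻¹ := by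
    rw [hE]; field_simp; ring
  constructor
  · rw [hsum, Real.log_inv]
    simp only [fmap]
    ring
  · rw [hsum, inv_inv]

lemma fmap_image : fmap '' sSet = tSet := by
  ext q
  constructor
  · rintro ⟨p, hp, rfl⟩
    have hx : (0:ℝ) < p.1 := hp.1
    have hu0 : (0:ℝ) < p.2 := hp.2.1
    have hu1 : p.2 < 1 := hp.2.2
    have hx' : (0:ℝ) < p.1 := hx
    have h1u : (0:ℝ) < 1 - p.2 := by linarith
    have hy1 : (fmap p).1 = p.1 - Real.log p.2 := rfl
    have hy2 : (fmap p).2 = p.1 - Real.log (1 - p.2) := rfl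
    have hlogu : Real.log p.2 < 0 := Real.log_neg hu0 hu1
    have hy1pos : 0 < (fmap p).1 := by rw [hy1]; linarith
    refine ⟨hy1pos, ?_⟩
    have hey1 : Real.exp (fmap p).1 = Real.exp p.1 / p.2 := by
      rw [hy1, Real.exp_sub, Real.exp_log hu0]
    have hgt : Real.exp ((fmap p).1 - (fmap p).2) < Real.exp (fmap p).1 - 1 := by
      have hE : Real.exp ((fmap p).1 - (fmap p).2) = (1 - p.2) / p.2 := by
        rw [hy1, hy2,
          show p.1 - Real.log p.2 - (p.1 - Real.log (1 - p.2)) = Real.log (1 - p.2) - Real.log p.2 by ring,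
          Real.exp_sub, Real.exp_log h1u, Real.exp_log hu0]
      rw [hE, hey1]
      rw [div_sub' hu0.ne', div_lt_div_iff₀ hu0 hu0]
      have : 1 < Real.exp p.1 := by
        rw [show (1:ℝ) = Real.exp 0 by simp]; exact Real.exp_lt_exp.mpr hx'
      nlinarith
    have h1lt : 1 < Real.exp (fmap p).1 := by
      rw [show (1:ℝ) = Real.exp 0 by simp]; exact Real.exp_lt_exp.mpr hy1pos
    have := Real.log_lt_log (Real.exp_pos _) hgt
    rw [Real.log_exp] at this
    linarith
  · rintro ⟨hq1, hq2⟩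
    set E := Real.exp (q.1 - q.2) with hEdef
    have hEpos : 0 < E := Real.exp_pos _
    have h1E : (0:ℝ) < 1 + E := by linarith
    refine ⟨(q.1 - Real.log (1 + E), (1 + E)⁻¹), ⟨?_, ?_, ?_⟩, ?_⟩
    · have h1lt : 1 < Real.exp q.1 := by
        rw [show (1:ℝ) = Real.exp 0 by simp]; exact Real.exp_lt_exp.mpr hq1
      have hElt : E < Real.exp q.1 - 1 := by
        have := Real.exp_lt_exp.mpr (show q.1 - q.2 < Real.log (Real.exp q.1 - 1) by linarith)
        rwa [Real.exp_log (by linarith)] at this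
      have : Real.log (1 + E) < q.1 := by
        have := Real.log_lt_log h1E (show 1 + E < Real.exp q.1 by linarith)
        calc Real.log (1 + E) < Real.log (Real.exp q.1) := this
          _ = q.1 := Real.log_exp _
      simpa [Set.mem_Ioi] using sub_pos.mpr this
    · exact inv_pos.mpr h1E
    · rw [inv_lt_one_iff₀]; right; linarith
    · have hlogu : Real.log ((1 + E)⁻¹) = -Real.log (1 + E) := Real.log_inv _
      have h1mu : 1 - (1 + E)⁻¹ = E / (1 + E) := by field_simp; ring
      have hlog1mu : Real.log (1 - (1 + E)⁻¹) = (q.1 - q.2) - Real.log (1 + E) := by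
        rw [h1mu, Real.log_div hEpos.ne' h1E.ne', hEdef, Real.log_exp]
      simp only [fmap, hlogu, hlog1mu]
      exact Prod.ext (by ring) (by ring)

lemma fmap_injOn : Set.InjOn fmap sSet := by
  intro p hp q hq h
  have h1 := fmap_left_inv hp
  have h2 := fmap_left_inv hq
  rw [h] at h1
  exact Prod.ext (h1.1 ▸ h2.1 ▸ rfl) (h1.2 ▸ h2.2 ▸ rfl)

lemma key_pointwise (α : ℝ) (hα : 0 < α) {p : ℝ × ℝ} (hp : p ∈ sSet) :
    ENNReal.ofReal |(fder p).det| * dens1 α (fmap p) = rho0 α p := by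
  have hx : (0:ℝ) < p.1 := hp.1
  have hu0 : (0:ℝ) < p.2 := hp.2.1
  have hu1 : p.2 < 1 := hp.2.2
  have h1u : (0:ℝ) < 1 - p.2 := by linarith
  have hΓ : (0:ℝ) < Real.Gamma α := Real.Gamma_pos_of_pos hα
  have hdet : (0:ℝ) ≤ p.2⁻¹ + (1 - p.2)⁻¹ := by positivity
  rw [fder_det]
  simp only [dens1, rho0]
  rw [abs_of_nonneg hdet, (fmap_left_inv hp).1, ← ENNReal.ofReal_mul hdet]
  congr 1
  have he1 : Real.exp (fmap p).1 = Real.exp p.1 / p.2 := by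
    simp only [fmap]; rw [Real.exp_sub, Real.exp_log hu0]
  have he2 : Real.exp (fmap p).2 = Real.exp p.1 / (1 - p.2) := by
    simp only [fmap]; rw [Real.exp_sub, Real.exp_log h1u]
  rw [he1, he2, Real.exp_neg]
  have hexp : (0:ℝ) < Real.exp p.1 := Real.exp_pos _
  field_simp

lemma prod_dens (α : ℝ) (hα : 0 < α) :
    (gammaMeasure α 1).prod (volume.restrict (Ioo (0:ℝ) 1)) =
      (volume : Measure (ℝ × ℝ)).withDensity
        (fun p => gammaPDF α 1 p.1 * (Ioo (0:ℝ) 1).indicator 1 p.2) := by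
  haveI : IsProbabilityMeasure (gammaMeasure α 1) := isProbabilityMeasure_gammaMeasure hα one_pos
  refine Measure.prod_eq fun sA tB hs ht => ?_
  rw [withDensity_apply _ (hs.prod ht), Measure.volume_eq_prod,
    ← Measure.prod_restrict]
  rw [lintegral_prod_mul (f := fun x => gammaPDF α 1 x)
    (measurable_gammaPDFReal α 1).ennreal_ofReal.aemeasurable
    ((measurable_one.indicator measurableSet_Ioo).aemeasurable)]
  congr 1
  · rw [gammaMeasure, withDensity_apply _ hs]
  · rw [lintegral_indicator measurableSet_Ioo]
    simp only [Pi.one_apply]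
    rw [setLIntegral_one, Measure.restrict_apply measurableSet_Ioo,
      Measure.restrict_apply ht, Set.inter_comm]

lemma dens_indicator (α : ℝ) :
    (fun p : ℝ × ℝ => gammaPDF α 1 p.1 * (Ioo (0:ℝ) 1).indicator 1 p.2)
      = (Ici (0:ℝ) ×ˢ Ioo (0:ℝ) 1).indicator (rho0 α) := by
  funext p
  by_cases h2 : p.2 ∈ Ioo (0:ℝ) 1
  · by_cases h1 : (0:ℝ) ≤ p.1
    · have hmem : p ∈ Ici (0:ℝ) ×ˢ Ioo (0:ℝ) 1 := ⟨h1, h2⟩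
      rw [Set.indicator_of_mem hmem, Set.indicator_of_mem h2,
        gammaPDF_of_nonneg h1, Pi.one_apply, mul_one, rho0]
      congr 1
      rw [Real.one_rpow]
      ring
    · have hmem : p ∉ Ici (0:ℝ) ×ˢ Ioo (0:ℝ) 1 := fun h => h1 h.1
      rw [Set.indicator_of_notMem hmem, gammaPDF_of_neg (lt_of_not_ge h1), zero_mul]
  · have hmem : p ∉ Ici (0:ℝ) ×ˢ Ioo (0:ℝ) 1 := fun h => h2 h.2
    rw [Set.indicator_of_notMem hmem, Set.indicator_of_notMem h2, mul_zero]

lemma restrict_Ici_eq (α : ℝ) :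
    (volume : Measure (ℝ × ℝ)).restrict (Ici (0:ℝ) ×ˢ Ioo (0:ℝ) 1)
      = (volume : Measure (ℝ × ℝ)).restrict sSet := by
  apply Measure.restrict_congr_set
  rw [MeasureTheory.ae_eq_set]
  constructor
  · have hsub : (Ici (0:ℝ) ×ˢ Ioo (0:ℝ) 1) \ sSet ⊆ ({0} : Set ℝ) ×ˢ (univ : Set ℝ) := by
      rintro p ⟨⟨h1, h2⟩, hns⟩
      have : ¬ (0 < p.1) ∨ ¬ (p.2 ∈ Ioo (0:ℝ) 1) := by
        by_contra h
        push_neg at h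
        exact hns ⟨h.1, h.2⟩
      rcases this with h | h
      · exact ⟨le_antisymm (not_lt.mp h) h1 ▸ rfl, trivial⟩
      · exact absurd h2 h
    refine measure_mono_null hsub ?_
    rw [Measure.volume_eq_prod, Measure.prod_prod]
    simp
  · have : sSet \ (Ici (0:ℝ) ×ˢ Ioo (0:ℝ) 1) = ∅ := by
      ext p
      simp only [Set.mem_diff, Set.mem_empty_iff_false, iff_false, not_and, not_not]
      rintro ⟨h1, h2⟩
      exact ⟨Set.mem_Ici.mpr (le_of_lt h1), h2⟩
    rw [this]
    simp

theorem stmt_12 {Ω : Type*} [MeasureSpace Ω] [IsProbabilityMeasure (ℙ : Measure Ω)]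
    (α : ℝ) (hα : 0 < α)
    (X₀ U : Ω → ℝ) (hX₀ : Measurable X₀) (hU : Measurable U)
    (hgamma : Measure.map X₀ ℙ = gammaMeasure α 1)
    (hunif : Measure.map U ℙ = volume.restrict (Set.Ioo (0:ℝ) 1))
    (hindep : IndepFun X₀ U ℙ)
    (Y₁ Y₂ : Ω → ℝ)
    (hY₁ : Y₁ = fun ω => X₀ ω - Real.log (U ω))
    (hY₂ : Y₂ = fun ω => X₀ ω - Real.log (1 - U ω)) :
    Measure.map (fun ω => (Y₁ ω, Y₂ ω)) ℙ
      = (volume : Measure (ℝ × ℝ)).withDensity (fun p =>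
          if 0 < p.1 ∧ p.1 - Real.log (Real.exp p.1 - 1) < p.2 then
            ENNReal.ofReal ((p.1 - Real.log (1 + Real.exp (p.1 - p.2))) ^ (α - 1) /
              (Real.Gamma α * (Real.exp p.1 + Real.exp p.2)))
          else 0) := by
  subst hY₁ hY₂
  have hpair : Measurable fun ω => (X₀ ω, U ω) := hX₀.prodMk hU
  have hcomp : (fun ω => (X₀ ω - Real.log (U ω), X₀ ω - Real.log (1 - U ω)))
      = fmap ∘ (fun ω => (X₀ ω, U ω)) := rfl
  rw [hcomp, ← Measure.map_map fmap_measurable hpair,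
    (indepFun_iff_map_prod_eq_prod_map_map hX₀.aemeasurable hU.aemeasurable).mp hindep,
    hgamma, hunif, prod_dens α hα, dens_indicator α,
    withDensity_indicator (measurableSet_Ici.prod measurableSet_Ioo), restrict_Ici_eq α]
  have hrhs : (fun p : ℝ × ℝ =>
      if 0 < p.1 ∧ p.1 - Real.log (Real.exp p.1 - 1) < p.2 then
        ENNReal.ofReal ((p.1 - Real.log (1 + Real.exp (p.1 - p.2))) ^ (α - 1) /
          (Real.Gamma α * (Real.exp p.1 + Real.exp p.2)))
      else 0) = tSet.indicator (dens1 α) := by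
    funext p
    by_cases h : 0 < p.1 ∧ p.1 - Real.log (Real.exp p.1 - 1) < p.2
    · rw [if_pos h, Set.indicator_of_mem (show p ∈ tSet from h)]
      rfl
    · rw [if_neg h, Set.indicator_of_notMem (show p ∉ tSet from h)]
  rw [hrhs, withDensity_indicator tSet_measurable]
  ext A hA
  rw [Measure.map_apply fmap_measurable hA,
    withDensity_apply _ (fmap_measurable hA),
    Measure.restrict_restrict (fmap_measurable hA),
    withDensity_apply _ hA, Measure.restrict_restrict hA]
  have hfder : ∀ p ∈ sSet, HasFDerivWithinAt fmap (fder p) sSet p :=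
    fun p hp => (fmap_hasFDerivAt hp.2.1 hp.2.2).hasFDerivWithinAt
  have key := lintegral_image_eq_lintegral_abs_det_fderiv_mul
    (volume : Measure (ℝ × ℝ)) sSet_measurable hfder fmap_injOn (A.indicator (dens1 α))
  rw [fmap_image] at key
  rw [lintegral_indicator hA, Measure.restrict_restrict hA] at key
  rw [key]
  have congr1 : ∫⁻ x in sSet, ENNReal.ofReal |(fder x).det| * (A.indicator (dens1 α)) (fmap x)
      = ∫⁻ x in sSet, (fmap ⁻¹' A).indicator (rho0 α) x := by
    refine setLIntegral_congr_fun_ae sSet_measurable (ae_of_all _ fun p hp => ?_)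
    by_cases hmem : fmap p ∈ A
    · rw [Set.indicator_of_mem hmem, Set.indicator_of_mem (Set.mem_preimage.mpr hmem)]
      exact key_pointwise α hα hp
    · have hmem' : p ∉ fmap ⁻¹' A := hmem
      rw [Set.indicator_of_notMem hmem, Set.indicator_of_notMem hmem', mul_zero]
  rw [congr1, lintegral_indicator (fmap_measurable hA),
    Measure.restrict_restrict (fmap_measurable hA)]
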